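/- Let F be a facet of a simplicial forest Γ. Then the reduced connected component conn̄_Γ(F) of F in Γ is a simplicial forest. -/

import Mathlib

open Finset

/-- A (finite) simplicial complex, recorded via its facets: a finite antichain of
nonempty finite subsets of the vertex type `V`.  The faces of the complex are
exactly the subsets of the facets, so the complex is determined by this data. -/
structure FacetComplex (V : Type) [DecidableEq V] : Type where
  facets : Finset (Finset V)
  nonempty_of_mem : ∀ F ∈ facets, F ≠ ∅
  antichain : ∀ F ∈ facets, ∀ G ∈ facets, F ⊆ G → F = G

namespace FacetComplex

variable {V : Type} [DecidableEq V]

/-- The vertex set of a complex: the union of its facets. -/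
def vertexSet (Γ : FacetComplex V) : Finset V := Γ.facets.sup id

/-- A facet `F` is a leaf if it is the only facet, or there is another facet `G`
with `F ∩ F' ⊆ G` for every facet `F' ≠ F`. -/
def IsLeaf (Γ : FacetComplex V) (F : Finset V) : Prop :=
  F ∈ Γ.facets ∧ (Γ.facets = {F} ∨
    ∃ G ∈ Γ.facets, G ≠ F ∧ ∀ F' ∈ Γ.facets, F' ≠ F → F ∩ F' ⊆ G)

/-- Two facets are connected if they are joined by a chain of facets in which
consecutive facets intersect nontrivially. -/
def FacetConnected (Γ : FacetComplex V) (F G : Finset V) : Prop :=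
  Relation.ReflTransGen
    (fun A B => A ∈ Γ.facets ∧ B ∈ Γ.facets ∧ (A ∩ B).Nonempty) F G

/-- A complex is connected if any two of its facets are connected. -/
def Connected (Γ : FacetComplex V) : Prop :=
  ∀ F ∈ Γ.facets, ∀ G ∈ Γ.facets, Γ.FacetConnected F G

/-- The subcollection generated by a subset of the facets. -/
def subcollection (Γ : FacetComplex V) (s : Finset (Finset V))
    (hs : s ⊆ Γ.facets) : FacetComplex V where
  facets := s
  nonempty_of_mem := fun F hF => Γ.nonempty_of_mem F (hs hF)
  antichain := fun F hF G hG => Γ.antichain F (hs hF) G (hs hG)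

/-- A connected complex is a tree if every nonempty subcollection has a leaf. -/
def IsTree (Γ : FacetComplex V) : Prop :=
  Γ.Connected ∧ ∀ (s : Finset (Finset V)) (hs : s ⊆ Γ.facets), s.Nonempty →
    ∃ F, (Γ.subcollection s hs).IsLeaf F

open scoped Classical in
/-- The connected component of a facet `F` in `Γ`. -/
noncomputable def component (Γ : FacetComplex V) (F : Finset V) : FacetComplex V :=
  Γ.subcollection (Γ.facets.filter (fun G => Γ.FacetConnected F G))
    (Finset.filter_subset _ _)

/-- A complex is a forest if every connected component of it is a tree. -/
def IsForest (Γ : FacetComplex V) : Prop :=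
  ∀ F ∈ Γ.facets, (Γ.component F).IsTree

open scoped Classical in
/-- The reduced connected component `conn̄_Γ(F)` of a facet `F` of `Γ`: if the
connected component of `F` with `F` removed has facets `F_1, …, F_p`, its
facets are the minimal nonempty sets among `F_1 \ F, …, F_p \ F`. -/
noncomputable def reducedConn (Γ : FacetComplex V) (F : Finset V) : FacetComplex V where
  facets :=
    ((Γ.component F).facets.erase F).image (fun G => G \ F) |>.filter
      (fun A => A ≠ ∅ ∧
        ∀ B ∈ ((Γ.component F).facets.erase F).image (fun G => G \ F),
          B ≠ ∅ → B ⊆ A → B = A)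
  nonempty_of_mem := fun A hA => (Finset.mem_filter.mp hA).2.1
  antichain := fun A hA B hB hAB => by
    have hA' := Finset.mem_filter.mp hA
    have hB' := Finset.mem_filter.mp hB
    exact (hB'.2.2 A hA'.1 hA'.2.1 hAB)

open scoped Classical in
/-- The induced subcollection `Γ_A` on a set of vertices `A`: it is generated by
the facets of `Γ` contained in `A`. -/
def induced (Γ : FacetComplex V) (A : Finset V) : FacetComplex V :=
  Γ.subcollection (Γ.facets.filter (fun F => F ⊆ A)) (Finset.filter_subset _ _)

/-- The subcomplex `⟨s ∩ facets⟩` generated by those members of `s` that are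
facets of `Γ`; for `s ⊆ Γ.facets` this is the subcollection generated by `s`. -/
def restrict (Γ : FacetComplex V) (s : Finset (Finset V)) : FacetComplex V :=
  Γ.subcollection (s ∩ Γ.facets) Finset.inter_subset_right

/-- The facet ideal of `Γ`: the squarefree monomial ideal of `k[x_v : v ∈ V]`
generated by the products `∏_{x ∈ F} x` over the facets `F` of `Γ`. -/
noncomputable def facetIdeal (k : Type) [Field k] (Γ : FacetComplex V) :
    Ideal (MvPolynomial V k) :=
  Ideal.span ((fun F : Finset V => ∏ x ∈ F, MvPolynomial.X x) '' Γ.facets)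

end FacetComplex

/-- The squarefree multidegree (exponent vector) attached to a finite set `A` of
variables, i.e. the multidegree of the squarefree monomial `∏_{v ∈ A} x_v`. -/
noncomputable def sqfDeg {V : Type} [DecidableEq V] (A : Finset V) : V →₀ ℕ :=
  ∑ v ∈ A, Finsupp.single v 1

namespace FacetComplex

variable {V : Type} [DecidableEq V]

lemma facetConnected_symm' (Γ : FacetComplex V) {A B : Finset V}
    (h : Γ.FacetConnected A B) : Γ.FacetConnected B A := by
  induction h with
  | refl => exact .refl
  | tail _ hstep ih =>
      exact Relation.ReflTransGen.head
        ⟨hstep.2.1, hstep.1, by rw [Finset.inter_comm]; exact hstep.2.2⟩ ih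

lemma mem_component_facets {Γ : FacetComplex V} {F G : Finset V} :
    G ∈ (Γ.component F).facets ↔ G ∈ Γ.facets ∧ Γ.FacetConnected F G := by
  classical
  simp [component, subcollection]

lemma component_facetConnected {Γ : FacetComplex V} {F A : Finset V}
    (h : Γ.FacetConnected F A) : (Γ.component F).FacetConnected F A := by
  induction h with
  | refl => exact .refl
  | tail h1 hstep ih =>
      exact ih.tail ⟨mem_component_facets.2 ⟨hstep.1, h1⟩,
        mem_component_facets.2 ⟨hstep.2.1, h1.tail hstep⟩, hstep.2.2⟩

lemma component_connected (Γ : FacetComplex V) (F : Finset V) :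
    (Γ.component F).Connected := by
  intro A hA B hB
  obtain ⟨-, hFA⟩ := mem_component_facets.1 hA
  obtain ⟨-, hFB⟩ := mem_component_facets.1 hB
  exact ((Γ.component F).facetConnected_symm'
    (component_facetConnected hFA)).trans (component_facetConnected hFB)

/-- In a forest, every nonempty subset of the facet set has a leaf. -/
lemma forest_leaf {Γ : FacetComplex V} (hΓ : Γ.IsForest)
    (s : Finset (Finset V)) (hs : s ⊆ Γ.facets) (hne : s.Nonempty) :
    ∃ L, (Γ.subcollection s hs).IsLeaf L := by
  classical
  obtain ⟨F0, hF0⟩ := hne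
  set s' : Finset (Finset V) := s.filter (fun G => Γ.FacetConnected F0 G) with hs'
  have hs'sub : s' ⊆ (Γ.component F0).facets := by
    intro G hG
    rw [Finset.mem_filter] at hG
    exact mem_component_facets.2 ⟨hs hG.1, hG.2⟩
  have hF0s' : F0 ∈ s' := Finset.mem_filter.2 ⟨hF0, .refl⟩
  obtain ⟨L, hLmem, hLleaf⟩ := (hΓ F0 (hs hF0)).2 s' hs'sub ⟨F0, hF0s'⟩
  have hLs' : L ∈ s' := hLmem
  have hLs : L ∈ s := (Finset.mem_filter.1 hLs').1
  -- any facet of s outside s' is disjoint from L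
  have hdisj : ∀ F' ∈ s, F' ∉ s' → L ∩ F' = ∅ := by
    intro F' hF' hF's'
    by_contra hne'
    have hconn : Γ.FacetConnected F0 F' :=
      (Finset.mem_filter.1 hLs').2.tail
        ⟨hs hLs, hs hF', Finset.nonempty_iff_ne_empty.2 hne'⟩
    exact hF's' (Finset.mem_filter.2 ⟨hF', hconn⟩)
  refine ⟨L, hLs, ?_⟩
  by_cases hsL : s = {L}
  · exact Or.inl hsL
  · right
    have hM : ∃ M ∈ s, M ≠ L := by
      by_contra h
      push_neg at h
      exact hsL (Finset.eq_singleton_iff_unique_mem.2 ⟨hLs, fun x hx => h x hx⟩)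
    obtain ⟨M, hMs, hML⟩ := hM
    rcases hLleaf with h1 | ⟨G, hGs', hGL, hGprop⟩
    · -- s' = {L}
      refine ⟨M, hMs, hML, fun F' hF' hF'L => ?_⟩
      have : F' ∉ s' := by
        intro hmem
        have hmem' : F' ∈ ((Γ.component F0).subcollection s' hs'sub).facets := hmem
        rw [h1, Finset.mem_singleton] at hmem'
        exact hF'L hmem' 
      rw [hdisj F' hF' this]
      exact Finset.empty_subset _
    · refine ⟨G, (Finset.mem_filter.1 hGs').1, hGL, fun F' hF' hF'L => ?_⟩
      by_cases hmem : F' ∈ s'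
      · exact hGprop F' hmem hF'L
      · rw [hdisj F' hF' hmem]; exact Finset.empty_subset _

end FacetComplex

/-- If `F` is a facet of a simplicial forest `Γ`, then the
reduced connected component `conn̄_Γ(F)` of `F` in `Γ` is a simplicial forest. -/

theorem reducedConn_isForest
    {V : Type} [Fintype V] [DecidableEq V]
    (Γ : FacetComplex V) (hΓ : Γ.IsForest)
    (F : Finset V) (hF : F ∈ Γ.facets) :
    (Γ.reducedConn F).IsForest := by
  classical
  set Δ := Γ.reducedConn F with hΔ
  -- every facet of Δ is of the form G \ F for some facet G of Γ (in component of F, ≠ F)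
  set E : Finset (Finset V) := (Γ.component F).facets.erase F with hE
  have hEfacets : E ⊆ Γ.facets := fun G hG =>
    (FacetComplex.mem_component_facets.1 (Finset.mem_of_mem_erase hG)).1
  have hΔmem : ∀ A ∈ Δ.facets, A ≠ ∅ ∧ ∃ G ∈ E, G \ F = A := by
    intro A hA
    simp only [hΔ, FacetComplex.reducedConn, Finset.mem_filter, Finset.mem_image] at hA
    obtain ⟨⟨G, hG, hGA⟩, hAne, -⟩ := hA
    exact ⟨hAne, G, hG, hGA⟩
  -- choice function lifting facets of Δ to facets of Γ
  have hφ : ∀ A ∈ Δ.facets, ∃ G, G ∈ E ∧ G \ F = A := by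
    intro A hA
    obtain ⟨-, G, hG, hGA⟩ := hΔmem A hA
    exact ⟨G, hG, hGA⟩
  set φ : Finset V → Finset V :=
    fun A => if h : ∃ G, G ∈ E ∧ G \ F = A then h.choose else ∅ with hφdef
  have hφspec : ∀ A ∈ Δ.facets, φ A ∈ E ∧ φ A \ F = A := by
    intro A hA
    have h := hφ A hA
    simp only [hφdef, dif_pos h]
    exact h.choose_spec
  -- main goal
  intro G0 hG0
  constructor
  · exact FacetComplex.component_connected Δ G0
  · intro s hs hsne
    have hsΔ : s ⊆ Δ.facets := hs.trans (Finset.filter_subset _ _)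
    -- lift s through φ
    set T : Finset (Finset V) := s.image φ with hT
    have hTsub : T ⊆ Γ.facets := by
      intro G hG
      obtain ⟨A, hA, rfl⟩ := Finset.mem_image.1 hG
      exact hEfacets (hφspec A (hsΔ hA)).1
    have hTne : T.Nonempty := hsne.image φ
    obtain ⟨L, hLmem, hLleaf⟩ := FacetComplex.forest_leaf hΓ T hTsub hTne
    have hLT : L ∈ T := hLmem
    obtain ⟨A, hAs, hφA⟩ := Finset.mem_image.1 hLT
    have hAΔ := hφspec A (hsΔ hAs)
    refine ⟨A, hAs, ?_⟩
    rcases hLleaf with h1 | ⟨G', hG'T, hG'L, hG'prop⟩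
    · -- T = {L} forces s = {A}
      left
      refine Finset.eq_singleton_iff_unique_mem.2 ⟨hAs, fun A' hA' => ?_⟩
      have hφA' := hφspec A' (hsΔ hA')
      have hmem' : φ A' ∈ (Γ.subcollection T hTsub).facets := Finset.mem_image_of_mem φ hA'
      rw [h1, Finset.mem_singleton] at hmem'
      rw [← hφA'.2, hmem', ← hφA, hAΔ.2]
    · right
      obtain ⟨B, hBs, hφB⟩ := Finset.mem_image.1 hG'T
      have hBΔ := hφspec B (hsΔ hBs)
      have hBA : B ≠ A := by
        intro h
        apply hG'L
        rw [← hφB, ← hφA, h]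
      refine ⟨B, hBs, hBA, fun A' hA' hA'A => ?_⟩
      have hφA' := hφspec A' (hsΔ hA')
      have hφA'T : φ A' ∈ T := Finset.mem_image_of_mem φ hA'
      have hφA'L : φ A' ≠ L := by
        intro h
        apply hA'A
        rw [← hφA'.2, h, ← hφA, hAΔ.2]
      have hsub : L ∩ φ A' ⊆ G' := hG'prop (φ A') hφA'T hφA'L
      intro x hx
      rw [Finset.mem_inter] at hx
      have hxA : x ∈ A := hx.1
      have hxA' : x ∈ A' := hx.2
      rw [← hAΔ.2, Finset.mem_sdiff] at hxA
      rw [← hφA'.2, Finset.mem_sdiff] at hxA'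
      have hxG' : x ∈ G' := hsub (Finset.mem_inter.2 ⟨hφA ▸ hxA.1, hxA'.1⟩)
      rw [← hBΔ.2]
      exact Finset.mem_sdiff.2 ⟨by rw [hφB]; exact hxG', hxA.2⟩
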